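/- arXiv:2501.17396 — 2 statements merged into one kernel-verified Lean document; each statement's English description precedes it below -/
import Mathlib

section
/- Let (w^t) and (ẅ^t) be two sequences in ℝ^d with updates w^{t+1} = w^t - ηΣ_{i} α_i ĝ_i^t and ẅ^{t+1} = ẅ^t - ηΣ_i α_i ∇L_i(ẅ^t), where each L_i is μ-strongly convex and L-smooth, α_i ≥ 0 with Σα_i = 1, 0 < η ≤ min(1/μ, 1/L), and the estimated updates satisfy ‖ĝ_i^t - ∇L_i(w^t)‖ ≤ M for all i, t. Then for all t ≥ 0: ‖w^t - ẅ^t‖ ≤ (√(1-ημ))^t ‖w^0 - ẅ^0‖ + ηM·(1 - (√(1-ημ))^t)/(1 - √(1-ημ)). -/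
set_option maxHeartbeats 1000000


open scoped RealInnerProductSpace

/-- Theorem 1: the discrepancy between the unlearned model (using approximate updates)
and the train-from-scratch model is bounded geometrically. -/
theorem unlearn_guard_bound
    {d k : ℕ} (Lf : Fin k → EuclideanSpace ℝ (Fin d) → ℝ)
    (G : Fin k → EuclideanSpace ℝ (Fin d) → EuclideanSpace ℝ (Fin d))
    (α : Fin k → ℝ) (μ L η M : ℝ) (hμ : 0 < μ) (hL : 0 < L) (hM : 0 ≤ M)
    (hdiff : ∀ i w, HasGradientAt (Lf i) (G i w) w)
    (hsc : ∀ i w1 w2, Lf i w1 ≥ Lf i w2 + ⟪G i w2, w1 - w2⟫ + (μ / 2) * ‖w1 - w2‖ ^ 2)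
    (hsm : ∀ i w1 w2, Lf i w1 ≤ Lf i w2 + ⟪G i w2, w1 - w2⟫ + (L / 2) * ‖w1 - w2‖ ^ 2)
    (hα : ∀ i, 0 ≤ α i) (hαsum : ∑ i, α i = 1)
    (hη : 0 < η) (hηL : η ≤ 1 / L) (hημ : η ≤ 1 / μ)
    (w v : ℕ → EuclideanSpace ℝ (Fin d))
    (ghat : Fin k → ℕ → EuclideanSpace ℝ (Fin d))
    (hupd : ∀ t, w (t + 1) = w t - η • ∑ i, α i • ghat i t)
    (hupd' : ∀ t, v (t + 1) = v t - η • ∑ i, α i • G i (v t))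
    (herr : ∀ i t, ‖ghat i t - G i (w t)‖ ≤ M) :
    ∀ t, ‖w t - v t‖ ≤ (Real.sqrt (1 - η * μ)) ^ t * ‖w 0 - v 0‖ +
      η * M * (1 - (Real.sqrt (1 - η * μ)) ^ t) / (1 - Real.sqrt (1 - η * μ)) := by
  set r := Real.sqrt (1 - η * μ) with hrdef
  have hημ1 : η * μ ≤ 1 := by
    rw [le_div_iff₀ hμ] at hημ; linarith
  have hηL1 : η * L ≤ 1 := by
    rw [le_div_iff₀ hL] at hηL; linarith
  have hr0 : 0 ≤ r := Real.sqrt_nonneg _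
  have hr1 : r < 1 := by
    have h1 : 1 - η * μ < 1 := by nlinarith
    have := Real.sqrt_lt_sqrt (by nlinarith) h1
    simpa [Real.sqrt_one] using this
  have h1r : 0 < 1 - r := by linarith
  -- strong monotonicity
  have mono : ∀ i x y, μ * ‖x - y‖ ^ 2 ≤ ⟪G i x - G i y, x - y⟫ := by
    intro i x y
    have h1 := hsc i x y
    have h2 := hsc i y x
    have e1 : ⟪G i x, y - x⟫ = -⟪G i x, x - y⟫ := by
      rw [← inner_neg_right]; congr 1; abel
    have e2 : ‖y - x‖ = ‖x - y‖ := by rw [← norm_neg]; congr 1; abel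
    rw [e1, e2] at h2
    rw [inner_sub_left]
    nlinarith
  -- cocoercivity
  have coco : ∀ i x y, ‖G i x - G i y‖ ^ 2 ≤ L * ⟪G i x - G i y, x - y⟫ := by
    have key : ∀ x y, ∀ i, Lf i y + ⟪G i y, x - y⟫ + (1 / (2 * L)) * ‖G i x - G i y‖ ^ 2 ≤ Lf i x := by
      intro x y i
      set u := G i x - G i y with hu
      set z := x - (L⁻¹) • u with hz
      have h1 := hsm i z x
      have h2 := hsc i z y
      have hzx : z - x = -(L⁻¹ • u) := by rw [hz]; abel
      have hzy : z - y = (x - y) - L⁻¹ • u := by rw [hz]; abel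
      have e1 : ⟪G i x, z - x⟫ = -(L⁻¹ * ⟪G i x, u⟫) := by
        rw [hzx, inner_neg_right, real_inner_smul_right]
      have e2 : ‖z - x‖ ^ 2 = L⁻¹ ^ 2 * ‖u‖ ^ 2 := by
        rw [hzx, norm_neg, norm_smul]
        simp [mul_pow, abs_of_pos (inv_pos.mpr hL)]
      have e3 : ⟪G i y, z - y⟫ = ⟪G i y, x - y⟫ - L⁻¹ * ⟪G i y, u⟫ := by
        rw [hzy, inner_sub_right, real_inner_smul_right]
      have e4 : ⟪G i x, u⟫ - ⟪G i y, u⟫ = ‖u‖ ^ 2 := by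
        rw [← inner_sub_left, ← hu, real_inner_self_eq_norm_sq]
      have hμz : 0 ≤ (μ / 2) * ‖z - y‖ ^ 2 := by positivity
      rw [e1, e2] at h1
      rw [e3] at h2
      have hc1 : L / 2 * (L⁻¹ ^ 2 * ‖u‖ ^ 2) = 1 / (2 * L) * ‖u‖ ^ 2 := by
        field_simp
      have e4' : L⁻¹ * ⟪G i x, u⟫ = L⁻¹ * ⟪G i y, u⟫ + L⁻¹ * ‖u‖ ^ 2 := by
        linear_combination L⁻¹ * e4
      have hc3 : L⁻¹ * ‖u‖ ^ 2 = 2 * (1 / (2 * L) * ‖u‖ ^ 2) := by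
        field_simp
      linarith
    intro i x y
    have k1 := key x y i
    have k2 := key y x i
    have e1 : ⟪G i x, y - x⟫ = -⟪G i x, x - y⟫ := by
      rw [← inner_neg_right]; congr 1; abel
    have e2 : ‖G i y - G i x‖ = ‖G i x - G i y‖ := by
      rw [← norm_neg]; congr 1; abel
    rw [e1, e2] at k2
    rw [inner_sub_left]
    have hsum : 2 * (1 / (2 * L) * ‖G i x - G i y‖ ^ 2) ≤
        ⟪G i x, x - y⟫ - ⟪G i y, x - y⟫ := by linarith
    have h5 := mul_le_mul_of_nonneg_left hsum hL.le
    have hc : L * (2 * (1 / (2 * L) * ‖G i x - G i y‖ ^ 2)) = ‖G i x - G i y‖ ^ 2 := by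
      field_simp
    linarith
  -- per-gradient contraction
  have contr : ∀ i x y, ‖(x - η • G i x) - (y - η • G i y)‖ ≤ r * ‖x - y‖ := by
    intro i x y
    set u := G i x - G i y with hu
    set dd := x - y with hd
    have hid : (x - η • G i x) - (y - η • G i y) = dd - η • u := by
      rw [hu, hd, smul_sub]; abel
    rw [hid]
    have hsq : ‖dd - η • u‖ ^ 2 = ‖dd‖ ^ 2 - 2 * η * ⟪dd, u⟫ + η ^ 2 * ‖u‖ ^ 2 := by
      rw [norm_sub_sq_real, real_inner_smul_right, norm_smul]
      simp [mul_pow, abs_of_pos hη]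
      ring
    have hm := mono i x y
    have hc := coco i x y
    have hsymm : ⟪u, dd⟫ = ⟪dd, u⟫ := real_inner_comm _ _
    rw [← hu, ← hd] at hm hc
    rw [hsymm] at hm hc
    have hinner_nonneg : 0 ≤ ⟪dd, u⟫ := le_trans (by positivity) hm
    have hbound : ‖dd - η • u‖ ^ 2 ≤ (1 - η * μ) * ‖dd‖ ^ 2 := by
      rw [hsq]
      have hηsq : η ^ 2 * L ≤ η := by nlinarith
      have h1 : η ^ 2 * ‖u‖ ^ 2 ≤ η * ⟪dd, u⟫ := by
        nlinarith [mul_le_mul_of_nonneg_left hc (sq_nonneg η),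
          mul_le_mul_of_nonneg_right hηsq hinner_nonneg]
      nlinarith
    have h1 : ‖dd - η • u‖ = Real.sqrt (‖dd - η • u‖ ^ 2) :=
      (Real.sqrt_sq (norm_nonneg _)).symm
    rw [h1]
    have h2 : Real.sqrt (‖dd - η • u‖ ^ 2) ≤ Real.sqrt ((1 - η * μ) * ‖dd‖ ^ 2) :=
      Real.sqrt_le_sqrt hbound
    refine h2.trans ?_
    rw [Real.sqrt_mul (by nlinarith), Real.sqrt_sq (norm_nonneg _)]
  -- one-step recursion
  have step : ∀ t, ‖w (t + 1) - v (t + 1)‖ ≤ r * ‖w t - v t‖ + η * M := by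
    intro t
    have key : w (t + 1) - v (t + 1) =
        (∑ i, α i • ((w t - η • G i (w t)) - (v t - η • G i (v t)))) +
        (-η) • ∑ i, α i • (ghat i t - G i (w t)) := by
      rw [hupd, hupd']
      have hA : ∑ i, α i • ((w t - η • G i (w t)) - (v t - η • G i (v t)))
          = (w t - v t) - η • ∑ i, α i • G i (w t) + η • ∑ i, α i • G i (v t) := by
        have he : ∀ i : Fin k, α i • ((w t - η • G i (w t)) - (v t - η • G i (v t)))
            = α i • (w t - v t) - η • (α i • G i (w t)) + η • (α i • G i (v t)) := by
          intro i; module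
        rw [Finset.sum_congr rfl (fun i _ => he i), Finset.sum_add_distrib,
          Finset.sum_sub_distrib, ← Finset.smul_sum, ← Finset.smul_sum,
          ← Finset.sum_smul, hαsum, one_smul]
      have hB : ∑ i, α i • (ghat i t - G i (w t))
          = ∑ i, α i • ghat i t - ∑ i, α i • G i (w t) := by
        rw [← Finset.sum_sub_distrib]
        exact Finset.sum_congr rfl (fun i _ => smul_sub _ _ _)
      rw [hA, hB]
      module
    rw [key]
    refine (norm_add_le _ _).trans ?_
    have hA : ‖∑ i, α i • ((w t - η • G i (w t)) - (v t - η • G i (v t)))‖ ≤ r * ‖w t - v t‖ := by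
      refine (norm_sum_le _ _).trans ?_
      have : ∀ i ∈ Finset.univ, ‖α i • ((w t - η • G i (w t)) - (v t - η • G i (v t)))‖
          ≤ α i * (r * ‖w t - v t‖) := by
        intro i _
        rw [norm_smul, Real.norm_eq_abs, abs_of_nonneg (hα i)]
        exact mul_le_mul_of_nonneg_left (contr i (w t) (v t)) (hα i)
      refine (Finset.sum_le_sum this).trans ?_
      rw [← Finset.sum_mul, hαsum, one_mul]
    have hB : ‖(-η) • ∑ i, α i • (ghat i t - G i (w t))‖ ≤ η * M := by
      rw [norm_smul, Real.norm_eq_abs, abs_neg, abs_of_pos hη]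
      refine mul_le_mul_of_nonneg_left ?_ hη.le
      refine (norm_sum_le _ _).trans ?_
      have : ∀ i ∈ Finset.univ, ‖α i • (ghat i t - G i (w t))‖ ≤ α i * M := by
        intro i _
        rw [norm_smul, Real.norm_eq_abs, abs_of_nonneg (hα i)]
        exact mul_le_mul_of_nonneg_left (herr i t) (hα i)
      refine (Finset.sum_le_sum this).trans ?_
      rw [← Finset.sum_mul, hαsum, one_mul]
    linarith
  -- induction
  intro t
  induction t with
  | zero => simp
  | succ t ih =>
    have h1 := step t
    have h2 : r * ‖w t - v t‖ ≤ r * (r ^ t * ‖w 0 - v 0‖ + η * M * (1 - r ^ t) / (1 - r)) :=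
      mul_le_mul_of_nonneg_left ih hr0
    have h3 : r * (r ^ t * ‖w 0 - v 0‖ + η * M * (1 - r ^ t) / (1 - r)) + η * M =
        r ^ (t + 1) * ‖w 0 - v 0‖ + η * M * (1 - r ^ (t + 1)) / (1 - r) := by
      field_simp
      ring
    linarith
end

section
/- Suppose L : ℝ^d → ℝ is μ-strongly convex and L-smooth, η ∈ (0, 1/L], and ĝ^t satisfies ‖ĝ^t - ∇L(w^t)‖ ≤ M for all t. Define w^{t+1} = w^t - ηĝ^t and let w* be the unique minimizer of L. Then ‖w^t - w*‖ ≤ (√(1-ημ))^t ‖w^0 - w*‖ + ηM(1-(√(1-ημ))^t)/(1-√(1-ημ)) for all t. -/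
open scoped RealInnerProductSpace

/-- Inexact gradient descent on a μ-strongly convex, L-smooth function converges
geometrically to a neighborhood of the unique minimizer. -/
theorem inexact_gd_to_minimizer
    {d : ℕ} (L : EuclideanSpace ℝ (Fin d) → ℝ)
    (g : EuclideanSpace ℝ (Fin d) → EuclideanSpace ℝ (Fin d))
    (μ Lc η M : ℝ) (hμ : 0 < μ) (hLc : 0 < Lc) (hμL : μ ≤ Lc) (hM : 0 ≤ M)
    (hdiff : ∀ w, HasGradientAt L (g w) w)
    (hsc : ∀ w1 w2, L w1 ≥ L w2 + ⟪g w2, w1 - w2⟫ + (μ / 2) * ‖w1 - w2‖ ^ 2)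
    (hsm : ∀ w1 w2, L w1 ≤ L w2 + ⟪g w2, w1 - w2⟫ + (Lc / 2) * ‖w1 - w2‖ ^ 2)
    (hη : 0 < η) (hηL : η ≤ 1 / Lc)
    (wstar : EuclideanSpace ℝ (Fin d)) (hmin : ∀ w, L wstar ≤ L w) (hgrad0 : g wstar = 0)
    (w : ℕ → EuclideanSpace ℝ (Fin d)) (ghat : ℕ → EuclideanSpace ℝ (Fin d))
    (hupd : ∀ t, w (t + 1) = w t - η • ghat t)
    (herr : ∀ t, ‖ghat t - g (w t)‖ ≤ M) :
    ∀ t, ‖w t - wstar‖ ≤ (Real.sqrt (1 - η * μ)) ^ t * ‖w 0 - wstar‖ +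
      η * M * (1 - (Real.sqrt (1 - η * μ)) ^ t) / (1 - Real.sqrt (1 - η * μ)) := by
  set r := Real.sqrt (1 - η * μ) with hr
  have hημ1 : η * μ ≤ 1 := by
    have : η * μ ≤ (1 / Lc) * μ := by
      apply mul_le_mul_of_nonneg_right hηL hμ.le
    calc η * μ ≤ (1 / Lc) * μ := this
      _ ≤ 1 := by rw [div_mul_eq_mul_div, one_mul, div_le_one hLc]; exact hμL
  have hημ0 : 0 < η * μ := mul_pos hη hμ
  have hr0 : 0 ≤ r := Real.sqrt_nonneg _
  have hrsq : r ^ 2 = 1 - η * μ := by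
    rw [hr, sq, Real.mul_self_sqrt (by linarith)]
  have hr1 : r < 1 := by
    nlinarith [hrsq]
  have hηLc : η * Lc ≤ 1 := by
    rw [← le_div_iff₀ hLc] at *; exact hηL
  -- gradient norm bound: ‖g x‖² ≤ 2 Lc (L x - L wstar)
  have hgb : ∀ x, ‖g x‖ ^ 2 ≤ 2 * Lc * (L x - L wstar) := by
    intro x
    have h1 := hsm (x - (1 / Lc) • g x) x
    have h2 := hmin (x - (1 / Lc) • g x)
    have hin : ⟪g x, (x - (1 / Lc) • g x) - x⟫ = -(1 / Lc) * ‖g x‖ ^ 2 := by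
      have hv : (x - (1 / Lc) • g x) - x = -((1 / Lc) • g x) := by abel
      rw [hv, inner_neg_right, real_inner_smul_right, real_inner_self_eq_norm_sq]
      ring
    have hnr : ‖(x - (1 / Lc) • g x) - x‖ ^ 2 = (1 / Lc) ^ 2 * ‖g x‖ ^ 2 := by
      have : (x - (1 / Lc) • g x) - x = -((1 / Lc) • g x) := by abel
      rw [this, norm_neg, norm_smul, Real.norm_eq_abs,
        abs_of_pos (by positivity : (0:ℝ) < 1 / Lc)]
      ring
    rw [hin, hnr] at h1
    have hLcne : Lc ≠ 0 := ne_of_gt hLc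
    have h3 : L wstar ≤ L x - ‖g x‖ ^ 2 / (2 * Lc) := by
      have : L x + -(1 / Lc) * ‖g x‖ ^ 2 + Lc / 2 * ((1 / Lc) ^ 2 * ‖g x‖ ^ 2)
          = L x - ‖g x‖ ^ 2 / (2 * Lc) := by field_simp; ring
      linarith [h1, h2, this.le, this.ge]
    have h4 : ‖g x‖ ^ 2 / (2 * Lc) ≤ L x - L wstar := by linarith
    rw [div_le_iff₀ (by positivity : (0:ℝ) < 2 * Lc)] at h4
    linarith [h4]
  -- exact step contraction
  have hcontr : ∀ x, ‖(x - η • g x) - wstar‖ ≤ r * ‖x - wstar‖ := by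
    intro x
    have hsq : ‖(x - η • g x) - wstar‖ ^ 2 ≤ (1 - η * μ) * ‖x - wstar‖ ^ 2 := by
      have hexp : ‖(x - η • g x) - wstar‖ ^ 2 =
          ‖x - wstar‖ ^ 2 - 2 * η * ⟪g x, x - wstar⟫ + η ^ 2 * ‖g x‖ ^ 2 := by
        have : (x - η • g x) - wstar = (x - wstar) - η • g x := by abel
        rw [this, norm_sub_sq_real, real_inner_smul_right, norm_smul,
          real_inner_comm]
        simp [abs_of_nonneg hη.le]
        ring
      have hip : ⟪g x, x - wstar⟫ ≥ (L x - L wstar) + μ / 2 * ‖x - wstar‖ ^ 2 := by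
        have h := hsc wstar x
        have hni : ⟪g x, wstar - x⟫ = -⟪g x, x - wstar⟫ := by
          rw [← inner_neg_right]; congr 1; abel
        rw [hni] at h
        have : ‖wstar - x‖ = ‖x - wstar‖ := norm_sub_rev _ _
        rw [this] at h
        linarith
      have hg := hgb x
      have hLd : 0 ≤ L x - L wstar := by linarith [hmin x]
      have e1 : η * ((L x - L wstar) + μ / 2 * ‖x - wstar‖ ^ 2) ≤ η * ⟪g x, x - wstar⟫ :=
        mul_le_mul_of_nonneg_left hip hη.le
      have e2 : η ^ 2 * ‖g x‖ ^ 2 ≤ η ^ 2 * (2 * Lc * (L x - L wstar)) :=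
        mul_le_mul_of_nonneg_left hg (sq_nonneg η)
      have e3 : η * (η * Lc) * (L x - L wstar) ≤ η * 1 * (L x - L wstar) := by
        apply mul_le_mul_of_nonneg_right _ hLd
        exact mul_le_mul_of_nonneg_left hηLc hη.le
      rw [hexp]
      nlinarith [e1, e2, e3]
    calc ‖(x - η • g x) - wstar‖
        = Real.sqrt (‖(x - η • g x) - wstar‖ ^ 2) := by
          rw [Real.sqrt_sq (norm_nonneg _)]
      _ ≤ Real.sqrt ((1 - η * μ) * ‖x - wstar‖ ^ 2) := Real.sqrt_le_sqrt hsq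
      _ = r * ‖x - wstar‖ := by
          rw [Real.sqrt_mul (by linarith), Real.sqrt_sq (norm_nonneg _)]
  -- one-step inexact bound
  have hstep : ∀ t, ‖w (t + 1) - wstar‖ ≤ r * ‖w t - wstar‖ + η * M := by
    intro t
    have heq : w (t + 1) - wstar =
        ((w t - η • g (w t)) - wstar) - η • (ghat t - g (w t)) := by
      rw [hupd t, smul_sub]; abel
    calc ‖w (t + 1) - wstar‖
        = ‖((w t - η • g (w t)) - wstar) - η • (ghat t - g (w t))‖ := by rw [heq]
      _ ≤ ‖(w t - η • g (w t)) - wstar‖ + ‖η • (ghat t - g (w t))‖ :=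
          norm_sub_le _ _
      _ ≤ r * ‖w t - wstar‖ + η * M := by
          have h1 := hcontr (w t)
          have h2 : ‖η • (ghat t - g (w t))‖ ≤ η * M := by
            rw [norm_smul, Real.norm_eq_abs, abs_of_nonneg hη.le]
            exact mul_le_mul_of_nonneg_left (herr t) hη.le
          linarith
  intro t
  induction t with
  | zero =>
    simp
  | succ t ih =>
    have h1 := hstep t
    have h2 : r * ‖w t - wstar‖ ≤
        r * (r ^ t * ‖w 0 - wstar‖ + η * M * (1 - r ^ t) / (1 - r)) :=
      mul_le_mul_of_nonneg_left ih hr0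
    have hkey : r * (r ^ t * ‖w 0 - wstar‖ + η * M * (1 - r ^ t) / (1 - r)) + η * M =
        r ^ (t + 1) * ‖w 0 - wstar‖ + η * M * (1 - r ^ (t + 1)) / (1 - r) := by
      have h1r : (1 : ℝ) - r ≠ 0 := by linarith
      field_simp
      ring
    linarith [h1, h2, hkey.le]
end
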